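/- In a multi-source M/G/1/1 queue under the source-aware preemptive policy, the MGF of the interdeparture time of source c is M̄_{Y_c}(s) = a_c M_S(s−λ_c) / ((1 − a'_c)(1 − Σ_{c'≠c} a_{c'} M_S(s−λ_{c'})/(1 − a'_{c'}))), where a_c = λ_c/(λ − s) and a'_c = λ_c(1 − M_S(s−λ_c))/(λ_c − s), obtained by substituting p_{c'} = λ_{c'}/λ, p̄_{c'} = L_{λ_{c'}}, p'_{c'} = 1 − L_{λ_{c'}}, E[e^{sη_{c'}}] = λ/(λ−s), E[e^{sη̄_{c'}}] = M_S(s−λ_{c'})/L_{λ_{c'}}, E[e^{sη'_{c'}}] = λ_{c'}(1 − M_S(s−λ_{c'}))/((λ_{c'}−s)(1 − L_{λ_{c'}})) into the transfer-function formula of the semi-Markov chain. -/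

import Mathlib

open Finset

/-- Substituting `p_{c'} = λ_{c'}/λ`, `p̄_{c'} = L_{λ_{c'}}`, `p'_{c'} = 1 - L_{λ_{c'}}`,
`E[e^{sη_{c'}}] = λ/(λ-s)`, `E[e^{sη̄_{c'}}] = M_S(s-λ_{c'})/L_{λ_{c'}}`, and
`E[e^{sη'_{c'}}] = λ_{c'}(1 - M_S(s-λ_{c'}))/((λ_{c'}-s)(1 - L_{λ_{c'}}))` into the
transfer-function formula yields the MGF of the interdeparture time
`M̄_{Y_c}(s) = a_c M_S(s-λ_c) / ((1-a'_c)(1 - Σ_{c'≠c} a_{c'} M_S(s-λ_{c'})/(1-a'_{c'})))`,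
where `a_c = λ_c/(λ-s)` and `a'_c = λ_c(1 - M_S(s-λ_c))/(λ_c-s)`, and `L_{λ_c} = M_S(-λ_c)`. -/
theorem mgf_interdeparture_source_aware (C : ℕ) (c : Fin C) (lam : Fin C → ℝ)
    (hlam : ∀ c', 0 < lam c') (MS : ℝ → ℝ) (s : ℝ)
    (hsL : s < ∑ j, lam j) (hs : ∀ c', s < lam c')
    (hLpos : ∀ c', 0 < MS (-(lam c'))) (hL1 : ∀ c', MS (-(lam c')) ≠ 1)
    (hap : ∀ c', 1 - lam c' * (1 - MS (s - lam c')) / (lam c' - s) ≠ 0)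
    (hden : 1 - ∑ c' ∈ univ.erase c,
        (lam c' / (∑ j, lam j - s)) * MS (s - lam c') /
          (1 - lam c' * (1 - MS (s - lam c')) / (lam c' - s)) ≠ 0) :
    ((lam c / ∑ j, lam j) * ((∑ j, lam j) / (∑ j, lam j - s)) *
        (MS (-(lam c)) * (MS (s - lam c) / MS (-(lam c))))) /
      ((1 - (1 - MS (-(lam c))) *
          (lam c * (1 - MS (s - lam c)) / ((lam c - s) * (1 - MS (-(lam c)))))) *
        (1 - ∑ c' ∈ univ.erase c,
          ((lam c' / ∑ j, lam j) * ((∑ j, lam j) / (∑ j, lam j - s)) *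
              (MS (-(lam c')) * (MS (s - lam c') / MS (-(lam c'))))) /
            (1 - (1 - MS (-(lam c'))) *
              (lam c' * (1 - MS (s - lam c')) / ((lam c' - s) * (1 - MS (-(lam c')))))))) =
    ((lam c / (∑ j, lam j - s)) * MS (s - lam c)) /
      ((1 - lam c * (1 - MS (s - lam c)) / (lam c - s)) *
        (1 - ∑ c' ∈ univ.erase c,
          (lam c' / (∑ j, lam j - s)) * MS (s - lam c') /
            (1 - lam c' * (1 - MS (s - lam c')) / (lam c' - s)))) := by
  have hΛ : (0:ℝ) < ∑ j, lam j :=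
    Finset.sum_pos (fun j _ => hlam j) ⟨c, Finset.mem_univ c⟩
  have hΛ0 : (∑ j, lam j) ≠ 0 := ne_of_gt hΛ
  have hA : ∀ c' : Fin C,
      ((lam c' / ∑ j, lam j) * ((∑ j, lam j) / (∑ j, lam j - s)) *
        (MS (-(lam c')) * (MS (s - lam c') / MS (-(lam c'))))) =
      (lam c' / (∑ j, lam j - s)) * MS (s - lam c') := by
    intro c'
    have hL0 : MS (-(lam c')) ≠ 0 := ne_of_gt (hLpos c')
    field_simp
  have hB : ∀ c' : Fin C,
      (1 - (1 - MS (-(lam c'))) *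
          (lam c' * (1 - MS (s - lam c')) / ((lam c' - s) * (1 - MS (-(lam c')))))) =
      1 - lam c' * (1 - MS (s - lam c')) / (lam c' - s) := by
    intro c'
    have h1 : (1:ℝ) - MS (-(lam c')) ≠ 0 := sub_ne_zero.mpr (Ne.symm (hL1 c'))
    have h2 : lam c' - s ≠ 0 := sub_ne_zero.mpr (ne_of_gt (hs c'))
    congr 1
    field_simp
  rw [hA c, hB c]
  congr 3
  exact Finset.sum_congr rfl fun c' _ => by rw [hA c', hB c']
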